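/- Let k be a field and X a linearly ordered set. Every element of the free metabelian Lie algebra L₍₂₎(X) is a k-linear combination of images of generators x ∈ X and images of regular R-words [a₀,a₁,...,aₙ] (n ≥ 1, aᵢ ∈ X, a₀ > a₁ ≤ a₂ ≤ ⋯ ≤ aₙ); that is, these elements span L₍₂₎(X) over k. -/

import Mathlib

/-- The free metabelian Lie algebra on `X` over `k`. -/
abbrev FreeMetabelianLieAlgebra (k : Type u) [Field k] (X : Type v) :=
  FreeLieAlgebra k X ⧸ LieAlgebra.derivedSeries k (FreeLieAlgebra k X) 2

/-- The image of a generator `x ∈ X` in the free metabelian Lie algebra. -/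
noncomputable def FreeMetabelianLieAlgebra.of (k : Type u) [Field k] {X : Type v} (x : X) :
    FreeMetabelianLieAlgebra k X :=
  LieSubmodule.Quotient.mk (N := LieAlgebra.derivedSeries k (FreeLieAlgebra k X) 2)
    (FreeLieAlgebra.of k x)

/-- A regular `R`-word on a linearly ordered set `X`: data `a₀, a₁, …, aₙ` with `n ≥ 1`
and `a₀ > a₁ ≤ a₂ ≤ ⋯ ≤ aₙ`. -/
structure RWord (X : Type v) [LinearOrder X] where
  a₀ : X
  a₁ : X
  rest : List X
  lt : a₁ < a₀
  sorted : (a₁ :: rest).Pairwise (· ≤ ·)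

/-- The image in the free metabelian Lie algebra of a regular `R`-word, i.e. the
left-normed bracket `[a₀, a₁, …, aₙ]` of the images of its letters. -/
noncomputable def RWord.toLie (k : Type u) [Field k] {X : Type v} [LinearOrder X]
    (w : RWord X) : FreeMetabelianLieAlgebra k X :=
  ((w.a₁ :: w.rest).map (FreeMetabelianLieAlgebra.of k)).foldl (fun u v => ⁅u, v⁆)
    (FreeMetabelianLieAlgebra.of k w.a₀)

namespace FreeMetabelianAux

set_option linter.unusedSectionVars false

section Generic

variable {L : Type w} [LieRing L]

lemma foldlLie_zero (l : List L) : l.foldl (fun u v => ⁅u, v⁆) 0 = 0 := by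
  induction l with
  | nil => rfl
  | cons a t ih => rw [List.foldl_cons, zero_lie]; exact ih

lemma foldlLie_neg (u : L) (l : List L) :
    l.foldl (fun u v => ⁅u, v⁆) (-u) = -l.foldl (fun u v => ⁅u, v⁆) u := by
  induction l generalizing u with
  | nil => rfl
  | cons a t ih => rw [List.foldl_cons, List.foldl_cons, neg_lie]; exact ih _

lemma foldlLie_sub (u v : L) (l : List L) :
    l.foldl (fun u v => ⁅u, v⁆) (u - v)
      = l.foldl (fun u v => ⁅u, v⁆) u - l.foldl (fun u v => ⁅u, v⁆) v := by
  induction l generalizing u v with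
  | nil => rfl
  | cons a t ih => rw [List.foldl_cons, List.foldl_cons, List.foldl_cons, sub_lie]; exact ih _ _

lemma jacobi3 (a b c : L) : ⁅⁅a, b⁆, c⁆ = ⁅⁅a, c⁆, b⁆ - ⁅⁅b, c⁆, a⁆ := by
  have h := leibniz_lie a b c
  rw [← lie_skew a ⁅b, c⁆, ← lie_skew b ⁅a, c⁆] at h
  have h' : ⁅⁅a, b⁆, c⁆ = -⁅⁅b, c⁆, a⁆ + ⁅⁅a, c⁆, b⁆ := by rw [h]; abel
  rw [h']; abel

end Generic

variable {k : Type u} [Field k] {X : Type v}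

/-- The quotient map as a morphism of Lie algebras. -/
noncomputable def mkHom (k : Type u) [Field k] (X : Type v) :
    FreeLieAlgebra k X →ₗ⁅k⁆ FreeMetabelianLieAlgebra k X :=
  { (LieAlgebra.derivedSeries k (FreeLieAlgebra k X) 2).toSubmodule.mkQ with
    map_lie' := rfl }

/-- The metabelian relation in the quotient. -/
lemma metabelian (p q r s : FreeMetabelianLieAlgebra k X) : ⁅⁅p, q⁆, ⁅r, s⁆⁆ = 0 := by
  obtain ⟨p, rfl⟩ := LieSubmodule.Quotient.surjective_mk' _ p
  obtain ⟨q, rfl⟩ := LieSubmodule.Quotient.surjective_mk' _ q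
  obtain ⟨r, rfl⟩ := LieSubmodule.Quotient.surjective_mk' _ r
  obtain ⟨s, rfl⟩ := LieSubmodule.Quotient.surjective_mk' _ s
  have hmem : ⁅⁅p, q⁆, ⁅r, s⁆⁆ ∈ LieAlgebra.derivedSeries k (FreeLieAlgebra k X) 2 := by
    rw [LieAlgebra.derivedSeries_def, LieAlgebra.derivedSeriesOfIdeal_succ]
    refine LieSubmodule.lie_mem_lie ?_ ?_ <;>
    · rw [LieAlgebra.derivedSeriesOfIdeal_succ, LieAlgebra.derivedSeriesOfIdeal_zero]
      exact LieSubmodule.lie_mem_lie (LieSubmodule.mem_top _) (LieSubmodule.mem_top _)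
  calc ⁅⁅(LieSubmodule.Quotient.mk' _) p, (LieSubmodule.Quotient.mk' _) q⁆,
        ⁅(LieSubmodule.Quotient.mk' _) r, (LieSubmodule.Quotient.mk' _) s⁆⁆
      = LieSubmodule.Quotient.mk (N := LieAlgebra.derivedSeries k (FreeLieAlgebra k X) 2)
          ⁅⁅p, q⁆, ⁅r, s⁆⁆ := rfl
    _ = 0 := LieSubmodule.Quotient.mk_eq_zero'.mpr hmem

lemma swap2 (x y a b : FreeMetabelianLieAlgebra k X) :
    ⁅⁅⁅x, y⁆, a⁆, b⁆ = ⁅⁅⁅x, y⁆, b⁆, a⁆ := by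
  have h := leibniz_lie ⁅x, y⁆ a b
  rw [metabelian x y a b, ← lie_skew a ⁅⁅x, y⁆, b⁆] at h
  exact eq_of_sub_eq_zero (by rw [sub_eq_add_neg]; exact h.symm)

lemma foldl_perm {l l' : List (FreeMetabelianLieAlgebra k X)} (h : l.Perm l') :
    ∀ u : FreeMetabelianLieAlgebra k X,
      (∃ x y : FreeMetabelianLieAlgebra k X, u = ⁅x, y⁆) →
      l.foldl (fun p q => ⁅p, q⁆) u = l'.foldl (fun p q => ⁅p, q⁆) u := by
  induction h with
  | nil => intro u _; rfl
  | cons x h ih =>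
      intro u _
      rw [List.foldl_cons, List.foldl_cons]
      exact ih _ ⟨u, x, rfl⟩
  | swap x y l =>
      rintro u ⟨p, q, rfl⟩
      simp only [List.foldl_cons]
      rw [swap2]
  | trans h₁ h₂ ih₁ ih₂ =>
      intro u hu
      exact (ih₁ u hu).trans (ih₂ u hu)

variable [LinearOrder X]

/-- Left-normed bracket of generators. -/
noncomputable def lnb (k : Type u) [Field k] {X : Type v} (a : X) (l : List X) :
    FreeMetabelianLieAlgebra k X :=
  (l.map (FreeMetabelianLieAlgebra.of k)).foldl (fun u v => ⁅u, v⁆)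
    (FreeMetabelianLieAlgebra.of k a)

lemma lnb_append_single (a : X) (l : List X) (c : X) :
    lnb k a (l ++ [c]) = ⁅lnb k a l, FreeMetabelianLieAlgebra.of k c⁆ := by
  simp [lnb]

/-- The span of generators and regular `R`-words. -/
noncomputable def P (k : Type u) [Field k] (X : Type v) [LinearOrder X] :
    Submodule k (FreeMetabelianLieAlgebra k X) :=
  Submodule.span k
    (Set.range (Sum.elim (fun x : X => FreeMetabelianLieAlgebra.of k x)
      (fun w : RWord X => w.toLie k)))

lemma of_mem_P (a : X) : FreeMetabelianLieAlgebra.of k a ∈ P k X :=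
  Submodule.subset_span ⟨Sum.inl a, rfl⟩

lemma rword_mem_P (w : RWord X) : w.toLie k ∈ P k X :=
  Submodule.subset_span ⟨Sum.inr w, rfl⟩

lemma exists_min : ∀ (s : List X), s ≠ [] → ∃ m ∈ s, ∀ y ∈ s, m ≤ y := by
  intro s
  induction s with
  | nil => intro h; exact absurd rfl h
  | cons a t ih =>
      intro _
      rcases eq_or_ne t [] with rfl | ht
      · exact ⟨a, List.mem_cons_self, by simp⟩
      · obtain ⟨m, hm, hmin⟩ := ih ht
        refine ⟨min a m, ?_, ?_⟩
        · rcases le_total a m with h | h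
          · simp [min_eq_left h]
          · simp [min_eq_right h, hm]
        · intro y hy
          rcases List.mem_cons.mp hy with rfl | hy
          · exact min_le_left _ _
          · exact le_trans (min_le_right _ _) (hmin y hy)

/-- Case where the letter in position 1 is minimal: sort the tail, get a regular word. -/
lemma sorted_case {a b : X} {t : List X} (hba : b < a) (hbt : ∀ c ∈ t, b ≤ c) :
    lnb k a (b :: t) ∈ P k X := by
  set t' := t.insertionSort (· ≤ ·) with ht'
  have hperm : t.Perm t' := (List.perm_insertionSort (· ≤ ·) t).symm
  have hsorted : (b :: t').Pairwise (· ≤ ·) := by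
    rw [List.pairwise_cons]
    exact ⟨fun c hc => hbt c (hperm.symm.subset hc),
      List.pairwise_insertionSort (· ≤ ·) t⟩
  have heq : lnb k a (b :: t) = lnb k a (b :: t') := by
    show (t.map (FreeMetabelianLieAlgebra.of k)).foldl (fun u v => ⁅u, v⁆)
        ⁅FreeMetabelianLieAlgebra.of k a, FreeMetabelianLieAlgebra.of k b⁆
      = (t'.map (FreeMetabelianLieAlgebra.of k)).foldl (fun u v => ⁅u, v⁆)
        ⁅FreeMetabelianLieAlgebra.of k a, FreeMetabelianLieAlgebra.of k b⁆
    exact foldl_perm (hperm.map _) _ ⟨_, _, rfl⟩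
  rw [heq]
  exact rword_mem_P ⟨a, b, t', hba, hsorted⟩

/-- Every left-normed bracket of generators lies in the span of generators and
regular `R`-words. -/
lemma lnb_mem_P (a : X) (l : List X) : lnb k a l ∈ P k X := by
  rcases l with _ | ⟨b, t⟩
  · exact of_mem_P a
  by_cases hbt : ∀ c ∈ t, min a b ≤ c
  · rcases lt_trichotomy b a with h | h | h
    · exact sorted_case h fun c hc => (min_eq_right h.le ▸ hbt c hc : b ≤ c)
    · have hz : lnb k a (b :: t) = 0 := by
        show (t.map (FreeMetabelianLieAlgebra.of k)).foldl (fun u v => ⁅u, v⁆)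
            ⁅FreeMetabelianLieAlgebra.of k a, FreeMetabelianLieAlgebra.of k b⁆ = 0
        rw [h, lie_self]
        exact foldlLie_zero _
      rw [hz]; exact zero_mem _
    · have hneg : lnb k a (b :: t) = -lnb k b (a :: t) := by
        show (t.map (FreeMetabelianLieAlgebra.of k)).foldl (fun u v => ⁅u, v⁆)
            ⁅FreeMetabelianLieAlgebra.of k a, FreeMetabelianLieAlgebra.of k b⁆
          = -(t.map (FreeMetabelianLieAlgebra.of k)).foldl (fun u v => ⁅u, v⁆)
            ⁅FreeMetabelianLieAlgebra.of k b, FreeMetabelianLieAlgebra.of k a⁆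
        rw [← foldlLie_neg, lie_skew]
      rw [hneg]
      exact neg_mem (sorted_case h fun c hc => (min_eq_left h.le ▸ hbt c hc : a ≤ c))
  · push_neg at hbt
    obtain ⟨c, hc, hclt⟩ := hbt
    obtain ⟨m, hm, hmin⟩ := exists_min t (List.ne_nil_of_mem hc)
    have hma : m < a := lt_of_le_of_lt (hmin c hc) ((lt_min_iff.mp hclt).1)
    have hmb : m < b := lt_of_le_of_lt (hmin c hc) ((lt_min_iff.mp hclt).2)
    set t'' := t.erase m with ht''
    have hperm : t.Perm (m :: t'') := List.perm_cons_erase hm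
    have ht''sub : ∀ y ∈ t'', m ≤ y := fun y hy => hmin y (List.mem_of_mem_erase hy)
    have key : lnb k a (b :: t) = lnb k a (m :: b :: t'') - lnb k b (m :: a :: t'') := by
      have step1 : lnb k a (b :: t) = lnb k a (b :: m :: t'') := by
        show (t.map (FreeMetabelianLieAlgebra.of k)).foldl (fun u v => ⁅u, v⁆)
            ⁅FreeMetabelianLieAlgebra.of k a, FreeMetabelianLieAlgebra.of k b⁆
          = ((m :: t'').map (FreeMetabelianLieAlgebra.of k)).foldl (fun u v => ⁅u, v⁆)
            ⁅FreeMetabelianLieAlgebra.of k a, FreeMetabelianLieAlgebra.of k b⁆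
        exact foldl_perm (hperm.map _) _ ⟨_, _, rfl⟩
      rw [step1]
      show (t''.map (FreeMetabelianLieAlgebra.of k)).foldl (fun u v => ⁅u, v⁆)
          ⁅⁅FreeMetabelianLieAlgebra.of k a, FreeMetabelianLieAlgebra.of k b⁆,
            FreeMetabelianLieAlgebra.of k m⁆
        = (t''.map (FreeMetabelianLieAlgebra.of k)).foldl (fun u v => ⁅u, v⁆)
            ⁅⁅FreeMetabelianLieAlgebra.of k a, FreeMetabelianLieAlgebra.of k m⁆,
              FreeMetabelianLieAlgebra.of k b⁆
          - (t''.map (FreeMetabelianLieAlgebra.of k)).foldl (fun u v => ⁅u, v⁆)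
            ⁅⁅FreeMetabelianLieAlgebra.of k b, FreeMetabelianLieAlgebra.of k m⁆,
              FreeMetabelianLieAlgebra.of k a⁆
      rw [jacobi3, foldlLie_sub]
    rw [key]
    refine sub_mem ?_ ?_
    · refine sorted_case hma fun c' hc' => ?_
      rcases List.mem_cons.mp hc' with rfl | hc'
      · exact hmb.le
      · exact ht''sub c' hc'
    · refine sorted_case hmb fun c' hc' => ?_
      rcases List.mem_cons.mp hc' with rfl | hc'
      · exact hma.le
      · exact ht''sub c' hc'

/-- The span of left-normed brackets of generators. -/
noncomputable def M (k : Type u) [Field k] (X : Type v) [LinearOrder X] :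
    Submodule k (FreeMetabelianLieAlgebra k X) :=
  Submodule.span k (Set.range fun p : X × List X => lnb k p.1 p.2)

lemma lnb_mem_M (a : X) (l : List X) : lnb k a l ∈ M k X :=
  Submodule.subset_span ⟨(a, l), rfl⟩

lemma lie_of_mem_M {u : FreeMetabelianLieAlgebra k X} (hu : u ∈ M k X) (c : X) :
    ⁅u, FreeMetabelianLieAlgebra.of k c⁆ ∈ M k X := by
  induction hu using Submodule.span_induction with
  | mem x hx =>
      obtain ⟨⟨a, l⟩, rfl⟩ := hx
      show ⁅lnb k a l, FreeMetabelianLieAlgebra.of k c⁆ ∈ M k X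
      rw [← lnb_append_single]
      exact lnb_mem_M a (l ++ [c])
  | zero => rw [zero_lie]; exact zero_mem _
  | add x y _ _ hx hy => rw [add_lie]; exact add_mem hx hy
  | smul t x _ hx => rw [smul_lie]; exact Submodule.smul_mem _ _ hx

lemma lie_lnb_mem_M (b : X) :
    ∀ (m : List X) {u : FreeMetabelianLieAlgebra k X}, u ∈ M k X →
      ⁅u, lnb k b m⁆ ∈ M k X := by
  intro m
  induction m using List.reverseRecOn with
  | nil => intro u hu; exact lie_of_mem_M hu b
  | append_singleton m c ih =>
      intro u hu
      rw [lnb_append_single]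
      have hrw : ⁅u, ⁅lnb k b m, FreeMetabelianLieAlgebra.of k c⁆⁆
        = ⁅⁅u, lnb k b m⁆, FreeMetabelianLieAlgebra.of k c⁆
          - ⁅⁅u, FreeMetabelianLieAlgebra.of k c⁆, lnb k b m⁆ := by
        rw [leibniz_lie, ← lie_skew (lnb k b m) ⁅u, FreeMetabelianLieAlgebra.of k c⁆]
        abel
      rw [hrw]
      exact sub_mem (lie_of_mem_M (ih hu) c) (ih (lie_of_mem_M hu c))

lemma lie_mem_M {u v : FreeMetabelianLieAlgebra k X} (hu : u ∈ M k X) (hv : v ∈ M k X) :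
    ⁅u, v⁆ ∈ M k X := by
  induction hv using Submodule.span_induction with
  | mem x hx =>
      obtain ⟨⟨b, m⟩, rfl⟩ := hx
      exact lie_lnb_mem_M b m hu
  | zero => rw [lie_zero]; exact zero_mem _
  | add x y _ _ hx hy => rw [lie_add]; exact add_mem hx hy
  | smul t x _ hx => rw [lie_smul]; exact Submodule.smul_mem _ _ hx

/-- Left-normed brackets of generators span the free metabelian Lie algebra. -/
lemma M_eq_top : M k X = ⊤ := by
  rw [eq_top_iff]
  rintro z -
  let S : LieSubalgebra k (FreeMetabelianLieAlgebra k X) :=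
    { M k X with lie_mem' := fun hx hy => lie_mem_M hx hy }
  have hofS : ∀ x : X, FreeMetabelianLieAlgebra.of k x ∈ S := fun x => lnb_mem_M x []
  let F : FreeLieAlgebra k X →ₗ⁅k⁆ S :=
    FreeLieAlgebra.lift k fun x => (⟨FreeMetabelianLieAlgebra.of k x, hofS x⟩ : S)
  have hcomp : S.incl.comp F = mkHom k X := by
    apply FreeLieAlgebra.hom_ext
    intro x
    show (F (FreeLieAlgebra.of k x) : FreeMetabelianLieAlgebra k X) = _
    rw [show F (FreeLieAlgebra.of k x)
        = (⟨FreeMetabelianLieAlgebra.of k x, hofS x⟩ : S) from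
      FreeLieAlgebra.lift_of_apply _ x]
    rfl
  obtain ⟨w, rfl⟩ := LieSubmodule.Quotient.surjective_mk' _ z
  have hz : (LieSubmodule.Quotient.mk'
      (LieAlgebra.derivedSeries k (FreeLieAlgebra k X) 2)) w = mkHom k X w := rfl
  rw [hz, ← hcomp]
  exact (F w).2

end FreeMetabelianAux

/-- Every element of the free metabelian Lie algebra `L₍₂₎(X)` is a `k`-linear combination
of images of generators and images of regular `R`-words: these elements span `L₍₂₎(X)`. -/
theorem freeMetabelian_span (k : Type u) [Field k] (X : Type v) [LinearOrder X] :
    Submodule.span k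
        (Set.range (Sum.elim (fun x : X => FreeMetabelianLieAlgebra.of k x)
          (fun w : RWord X => w.toLie k))) = ⊤ := by
  rw [eq_top_iff, ← FreeMetabelianAux.M_eq_top (k := k) (X := X)]
  have : FreeMetabelianAux.M k X ≤ FreeMetabelianAux.P k X := by
    rw [FreeMetabelianAux.M, Submodule.span_le]
    rintro z ⟨⟨a, l⟩, rfl⟩
    exact FreeMetabelianAux.lnb_mem_P a l
  exact this
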